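/- If F is a grounded family of curves with χ(F) > 2(β+1), where β ≥ 0 is a natural number, then there are two intersecting curves u, v ∈ F with u ≺ v such that χ(F(u,v)) > β. -/

import Mathlib

open Set

attribute [local instance] Classical.propDecidable

abbrev Pt : Type := ℝ × ℝ

/-- The closed upper halfplane. -/
def upperH : Set Pt := {p | 0 ≤ p.2}

/-- A curve: image of a continuous map from `[0,1]` to the plane. -/
def IsCurve (c : Set Pt) : Prop :=
  ∃ f : ℝ → Pt, ContinuousOn f (Set.Icc 0 1) ∧ f '' Set.Icc 0 1 = c

/-- A grounded curve: contained in the upper halfplane, meeting the baseline in exactly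
one point which is an endpoint of the curve. -/
def IsGroundedCurve (c : Set Pt) : Prop :=
  (∃ f : ℝ → Pt, ContinuousOn f (Set.Icc 0 1) ∧ f '' Set.Icc 0 1 = c ∧ (f 0).2 = 0) ∧
  c ⊆ upperH ∧ (∃! p : Pt, p ∈ c ∧ p.2 = 0)

/-- The (unique) point of a grounded curve on the baseline. -/
noncomputable def basepoint (c : Set Pt) : Pt :=
  if h : ∃ p : Pt, p ∈ c ∧ p.2 = 0 then h.choose else (0, 0)

/-- A grounded family of curves. -/
def IsGrounded (F : Set (Set Pt)) : Prop :=
  F.Finite ∧ (∀ c ∈ F, IsGroundedCurve c) ∧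
  ∀ c ∈ F, ∀ d ∈ F, c ≠ d → basepoint c ≠ basepoint d

/-- `prec u v` : the basepoint of `u` lies to the left of that of `v`. -/
def prec (u v : Set Pt) : Prop := (basepoint u).1 < (basepoint v).1

/-- `F(u,v)`: the curves of `F` between `u` and `v`. -/
def between (F : Set (Set Pt)) (u v : Set Pt) : Set (Set Pt) :=
  {c | c ∈ F ∧ prec u c ∧ prec c v}

/-- A proper coloring of the intersection graph of `F` with `m` colors. -/
def Colorable (F : Set (Set Pt)) (m : ℕ) : Prop :=
  ∃ φ : Set Pt → ℕ, (∀ c ∈ F, φ c < m) ∧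
    ∀ c ∈ F, ∀ d ∈ F, c ≠ d → (c ∩ d).Nonempty → φ c ≠ φ d

/-- Chromatic number of the intersection graph of `F`. -/
noncomputable def chi (F : Set (Set Pt)) : ℕ := sInf {m | Colorable F m}

/-- `ω(F) ≤ k`: every clique (set of pairwise intersecting members) has at most `k` members. -/
def cliqueLE (F : Set (Set Pt)) (k : ℕ) : Prop :=
  ∀ K : Finset (Set Pt), ↑K ⊆ F →
    (∀ c ∈ K, ∀ d ∈ K, c ≠ d → (c ∩ d).Nonempty) → K.card ≤ k

/-- Points of `upperH \ W` whose path-component in `upperH \ W` is unbounded. -/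
def extOf (W : Set Pt) : Set Pt :=
  {x | x ∈ upperH \ W ∧ ¬ Bornology.IsBounded (pathComponentIn (upperH \ W) x)}

/-- The exterior of a family of curves. -/
def extFam (F : Set (Set Pt)) : Set Pt := extOf (⋃₀ F)

/-- A chosen parametrization of a grounded curve by `[0,1]` starting at its basepoint. -/
noncomputable def param (c : Set Pt) : ℝ → Pt :=
  if h : ∃ f : ℝ → Pt, ContinuousOn f (Set.Icc 0 1) ∧ f '' Set.Icc 0 1 = c ∧ f 0 = basepoint c
  then h.choose else fun _ => (0, 0)

/-- `t₀ = inf {t : c(t) ∈ A}` for the chosen parametrization of `c`. -/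
noncomputable def firstTime (c A : Set Pt) : ℝ :=
  sInf {t | t ∈ Set.Icc (0:ℝ) 1 ∧ param c t ∈ A}

/-- The first point of `c` on `A`. -/
noncomputable def firstPoint (c A : Set Pt) : Pt := param c (firstTime c A)

/-- The portion of `c` from its basepoint up to and including its first point on `A`. -/
noncomputable def portionTo (c A : Set Pt) : Set Pt :=
  param c '' Set.Icc 0 (firstTime c A)

/-- The portion of `c` from its basepoint strictly before its first point on `A`. -/
noncomputable def portionBefore (c A : Set Pt) : Set Pt :=
  param c '' Set.Ico 0 (firstTime c A)

/-- The initial portion of `c` up to `A`; all of `c` if `c` is disjoint from `A`. -/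
noncomputable def initialPortion (c A : Set Pt) : Set Pt :=
  if (c ∩ A).Nonempty then portionTo c A else c

/-- A skeleton `(u,v,S)` in `F`. -/
def IsSkeleton (F : Set (Set Pt)) (u v : Set Pt) (S : Set (Set Pt)) : Prop :=
  u ∈ F ∧ v ∈ F ∧ prec u v ∧ (u ∩ v).Nonempty ∧ S ⊆ between F u v ∧
  ∀ s ∈ S, ∀ s' ∈ S, s ≠ s' → s ∩ s' = ∅

/-- `P` is supported by the skeleton `(u,v,S)`. -/
def SupportedBy (F : Set (Set Pt)) (u v : Set Pt) (S P : Set (Set Pt)) : Prop :=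
  P ⊆ between F u v ∧
  (∀ p ∈ P, p ∩ u = ∅ ∧ p ∩ v = ∅) ∧
  ∀ p ∈ P, ∃ s ∈ S, (p ∩ initialPortion s (u ∪ v)).Nonempty

/-- The data of a bracket: the families `P`, `S` and the selection `p ↦ s(p)`. -/
structure CBracket where
  P : Set (Set Pt)
  S : Set (Set Pt)
  sel : Set Pt → Set Pt

/-- `(P,S)` (with selection `sel`) is a bracket in `F`. -/
def IsCBracket (F : Set (Set Pt)) (B : CBracket) : Prop :=
  B.P ⊆ F ∧ B.S ⊆ F ∧
  ((∀ p ∈ B.P, ∀ s ∈ B.S, prec p s) ∨ (∀ p ∈ B.P, ∀ s ∈ B.S, prec s p)) ∧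
  (∀ p ∈ B.P, ∃ s ∈ B.S, (p ∩ s).Nonempty) ∧
  (∀ p ∈ B.P, B.sel p ∈ B.S ∧ firstPoint p (⋃₀ B.S) ∈ B.sel p) ∧
  ∀ s ∈ B.S, ∃ p ∈ B.P, firstPoint p (⋃₀ B.S) ∈ s

/-- `I(p)`: points of `upperH` not in any unbounded path-component of
`upperH \ (p' ∪ s(p) ∪ B(p))`. -/
noncomputable def CBracket.regionOf (B : CBracket) (p : Set Pt) : Set Pt :=
  upperH \ extOf (portionBefore p (⋃₀ B.S) ∪ B.sel p ∪
    segment ℝ (basepoint p) (basepoint (B.sel p)))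

/-- The interior `I` of a bracket. -/
noncomputable def CBracket.inter (B : CBracket) : Set Pt := ⋂ p ∈ B.P, B.regionOf p

/-- The exterior `E` of a bracket. -/
def CBracket.exter (B : CBracket) : Set Pt := extOf (⋃₀ (B.P ∪ B.S))

/-- An `n`-bracket system in `F`. -/
def IsCBracketSystem (F : Set (Set Pt)) {n : ℕ} (B : Fin n → CBracket) : Prop :=
  (∀ i, IsCBracket F (B i)) ∧
  (∀ i, ∀ p ∈ (B i).P, ∀ j, i < j → p ⊆ (B j).inter) ∧
  ∀ i, ∀ s ∈ (B i).S, (s ∩ ⋂ j ∈ {j | i < j}, (B j).exter).Nonempty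

/-- A clique in `F` (a finite set of pairwise intersecting curves of `F`). -/
def IsCliqueIn (F : Set (Set Pt)) (K : Finset (Set Pt)) : Prop :=
  ↑K ⊆ F ∧ ∀ c ∈ K, ∀ d ∈ K, c ≠ d → (c ∩ d).Nonempty

/-- `ℓ(K)`: the curve of `K` with leftmost basepoint. -/
noncomputable def lcur (K : Finset (Set Pt)) : Set Pt :=
  if h : ∃ c ∈ K, ∀ d ∈ K, d ≠ c → prec c d then h.choose else ∅

/-- `r(K)`: the curve of `K` with second leftmost basepoint. -/
noncomputable def rcur (K : Finset (Set Pt)) : Set Pt :=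
  if h : ∃ c ∈ K, c ≠ lcur K ∧ ∀ d ∈ K, d ≠ c → d ≠ lcur K → prec c d
  then h.choose else ∅

/-- `ℓ'(K)`: portion of `ℓ(K)` up to and including its first point on `r(K)`. -/
noncomputable def lport (K : Finset (Set Pt)) : Set Pt := portionTo (lcur K) (rcur K)

/-- `r'(K)`: portion of `r(K)` strictly before its first point on `ℓ'(K)`. -/
noncomputable def rport (K : Finset (Set Pt)) : Set Pt := portionBefore (rcur K) (lport K)

/-- `s` is left for `K`. -/
def leftFor (K : Finset (Set Pt)) (s : Set Pt) : Prop :=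
  (s ∩ lport K).Nonempty ∧ portionTo s (lport K) ∩ rport K = ∅

/-- `s` is right for `K`. -/
def rightFor (K : Finset (Set Pt)) (s : Set Pt) : Prop :=
  (s ∩ rport K).Nonempty ∧ portionTo s (rport K) ∩ lport K = ∅

/-- A `(k₁,…,kₙ)`-clique system in `F`. -/
def IsCliqueSystem (F : Set (Set Pt)) {n : ℕ} (ks : Fin n → ℕ)
    (K : Fin n → Finset (Set Pt)) : Prop :=
  (∀ i, IsCliqueIn F (K i) ∧ (K i).card = ks i) ∧
  ∀ i j : Fin n, i < j →
    ↑(K j) ⊆ between F (lcur (K i)) (rcur (K i)) ∧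
    (∀ s ∈ K j, (s ∩ (lport (K i) ∪ rport (K i))).Nonempty) ∧
    ((∀ s ∈ K j, leftFor (K i) s) ∨ (∀ s ∈ K j, rightFor (K i) s))

/-- `s` crosses the clique system `K`. -/
def Crosses (F : Set (Set Pt)) {n : ℕ} (K : Fin (n+1) → Finset (Set Pt)) (s : Set Pt) : Prop :=
  s ∈ between F (lcur (K (Fin.last n))) (rcur (K (Fin.last n))) ∧
  (s ∩ extOf (⋃ i, ⋃₀ (↑(K i) : Set (Set Pt)))).Nonempty


/-! ### Auxiliary machinery for the proof -/

section McGAux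

private lemma colorable_subset {A B : Set (Set Pt)} {m : ℕ} (h : Colorable B m) (hs : A ⊆ B) :
    Colorable A m := by
  obtain ⟨φ, h1, h2⟩ := h
  exact ⟨φ, fun c hc => h1 c (hs hc), fun c hc d hd => h2 c (hs hc) d (hs hd)⟩

private lemma colorable_mono_nat {A : Set (Set Pt)} {m m' : ℕ} (h : Colorable A m)
    (hm : m ≤ m') : Colorable A m' := by
  obtain ⟨φ, h1, h2⟩ := h
  exact ⟨φ, fun c hc => lt_of_lt_of_le (h1 c hc) hm, h2⟩

private lemma colorable_finite {A : Set (Set Pt)} (h : A.Finite) : ∃ m, Colorable A m := by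
  classical
  refine ⟨h.toFinset.toList.length, fun c => h.toFinset.toList.idxOf c, ?_, ?_⟩
  · intro c hc
    exact List.idxOf_lt_length_iff.2 (by simp [hc])
  · intro c hc d hd hne _ heq
    have hc' : c ∈ h.toFinset.toList := by simp [hc]
    have hd' : d ∈ h.toFinset.toList := by simp [hd]
    exact hne ((List.idxOf_inj hc').1 heq)

private lemma chi_colorable {A : Set (Set Pt)} (h : A.Finite) : Colorable A (chi A) :=
  Nat.sInf_mem (colorable_finite h)

private lemma chi_le {A : Set (Set Pt)} {m : ℕ} (h : Colorable A m) : chi A ≤ m :=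
  Nat.sInf_le h

private lemma chi_mono {A B : Set (Set Pt)} (hB : B.Finite) (hs : A ⊆ B) : chi A ≤ chi B :=
  chi_le (colorable_subset (chi_colorable hB) hs)

private lemma chi_singleton (c : Set Pt) : chi ({c} : Set (Set Pt)) ≤ 1 := by
  refine chi_le ⟨fun _ => 0, fun _ _ => Nat.zero_lt_one, ?_⟩
  intro x hx y hy hne _
  rw [Set.mem_singleton_iff] at hx hy
  exact absurd (hx.trans hy.symm) hne

private lemma chi_insert {A : Set (Set Pt)} (h : A.Finite) (c : Set Pt) :
    chi (insert c A) ≤ chi A + 1 := by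
  by_cases hc : c ∈ A
  · rw [Set.insert_eq_self.2 hc]; omega
  · apply chi_le
    obtain ⟨φ, h1, h2⟩ := chi_colorable h
    refine ⟨fun x => if x = c then chi A else φ x, ?_, ?_⟩
    · intro x hx
      dsimp only
      by_cases hxc : x = c
      · simp [hxc]
      · rw [if_neg hxc]
        have hxA : x ∈ A := (Set.mem_insert_iff.1 hx).resolve_left hxc
        exact lt_of_lt_of_le (h1 x hxA) (Nat.le_succ _)
    · intro x hx y hy hne hint
      dsimp only
      rcases Set.mem_insert_iff.1 hx with rfl | hx'
      · rcases Set.mem_insert_iff.1 hy with rfl | hy'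
        · exact absurd rfl hne
        · have hyc : y ≠ x := fun hh => hc (hh ▸ hy')
          rw [if_pos rfl, if_neg hyc]
          exact fun hh => absurd hh.symm (Nat.ne_of_lt (h1 y hy'))
      · rcases Set.mem_insert_iff.1 hy with rfl | hy'
        · have hxc : x ≠ y := fun hh => hc (hh ▸ hx')
          rw [if_neg hxc, if_pos rfl]
          exact Nat.ne_of_lt (h1 x hx')
        · have hxc : x ≠ c := fun hh => hc (hh ▸ hx')
          have hyc : y ≠ c := fun hh => hc (hh ▸ hy')
          rw [if_neg hxc, if_neg hyc]
          exact h2 x hx' y hy' hne hint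

private lemma basepoint_snd {c : Set Pt} (h : IsGroundedCurve c) : (basepoint c).2 = 0 := by
  obtain ⟨p, hp, -⟩ := h.2.2
  have hex : ∃ p : Pt, p ∈ c ∧ p.2 = 0 := ⟨p, hp⟩
  rw [basepoint, dif_pos hex]
  exact hex.choose_spec.2

/-- Segment `[s, e)` of the enumeration `g` of the curves (restricted to indices `< n`). -/
private def mseg (g : ℕ → Set Pt) (n s e : ℕ) : Set (Set Pt) := g '' Set.Ico s (min e n)

private lemma mseg_finite (g : ℕ → Set Pt) (n s e : ℕ) : (mseg g n s e).Finite :=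
  (Set.finite_Ico _ _).image _

private lemma mseg_mono (g : ℕ → Set Pt) (n : ℕ) {s e e' : ℕ} (h : e ≤ e') :
    mseg g n s e ⊆ mseg g n s e' :=
  Set.image_mono (Set.Ico_subset_Ico le_rfl (by omega))

private lemma mseg_succ (g : ℕ → Set Pt) (n s e : ℕ) :
    mseg g n s (e + 1) ⊆ insert (g e) (mseg g n s e) := by
  rintro x ⟨i, ⟨h1, h2⟩, rfl⟩
  have hie : i ≤ e := by omega
  rcases eq_or_lt_of_le hie with rfl | hlt
  · exact Set.mem_insert _ _
  · exact Set.mem_insert_iff.2 (Or.inr ⟨i, ⟨h1, by omega⟩, rfl⟩)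

private lemma mseg_single (g : ℕ → Set Pt) {n s : ℕ} (hs : s < n) :
    mseg g n s (s + 1) = {g s} := by
  unfold mseg
  have : Set.Ico s (min (s + 1) n) = {s} := by
    ext x; simp only [Set.mem_Ico, Set.mem_singleton_iff]; omega
  rw [this, Set.image_singleton]

/-- The set of admissible endpoints of the greedy block starting at `s`. -/
private def mSet (g : ℕ → Set Pt) (n β s : ℕ) : Set ℕ :=
  {e | e ≤ n ∧ s < e ∧ chi (mseg g n s e) ≤ β + 1}

/-- The greedy next block boundary. -/
private noncomputable def mnext (g : ℕ → Set Pt) (n β s : ℕ) : ℕ :=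
  if s < n then sSup (mSet g n β s) else n

private lemma mnext_mem (g : ℕ → Set Pt) (n β : ℕ) {s : ℕ} (hs : s < n) :
    mnext g n β s ∈ mSet g n β s := by
  rw [mnext, if_pos hs]
  apply Nat.sSup_mem
  · refine ⟨s + 1, by omega, by omega, ?_⟩
    rw [mseg_single g hs]
    have := chi_singleton (g s); omega
  · exact ⟨n, fun e he => he.1⟩

private lemma mnext_le (g : ℕ → Set Pt) (n β s : ℕ) : mnext g n β s ≤ n := by
  by_cases hs : s < n
  · exact (mnext_mem g n β hs).1
  · rw [mnext, if_neg hs]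

private lemma mnext_gt (g : ℕ → Set Pt) (n β : ℕ) {s : ℕ} (hs : s < n) :
    s < mnext g n β s := (mnext_mem g n β hs).2.1

private lemma mnext_chi (g : ℕ → Set Pt) (n β : ℕ) {s : ℕ} (hs : s < n) :
    chi (mseg g n s (mnext g n β s)) ≤ β + 1 := (mnext_mem g n β hs).2.2

private lemma mnext_max (g : ℕ → Set Pt) (n β : ℕ) {s : ℕ} (hs : s < n)
    (h2 : mnext g n β s < n) : β < chi (mseg g n s (mnext g n β s)) := by
  have hgt := mnext_gt g n β hs
  have hnot : ¬ chi (mseg g n s (mnext g n β s + 1)) ≤ β + 1 := by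
    intro hle
    have hmem : mnext g n β s + 1 ∈ mSet g n β s := ⟨by omega, by omega, hle⟩
    have hle2 := le_csSup (⟨n, fun e he => he.1⟩ : BddAbove (mSet g n β s)) hmem
    have heq : mnext g n β s = sSup (mSet g n β s) := by rw [mnext, if_pos hs]
    omega
  have hchain : chi (mseg g n s (mnext g n β s + 1)) ≤ chi (mseg g n s (mnext g n β s)) + 1 :=
    le_trans (chi_mono ((mseg_finite g n s (mnext g n β s)).insert _)
      (mseg_succ g n s (mnext g n β s))) (chi_insert (mseg_finite g n s (mnext g n β s)) _)
  omega

/-- The greedy block starting positions. -/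
private noncomputable def mstart (g : ℕ → Set Pt) (n β : ℕ) : ℕ → ℕ :=
  fun k => (mnext g n β)^[k] 0

private lemma mstart_zero (g : ℕ → Set Pt) (n β : ℕ) : mstart g n β 0 = 0 := rfl

private lemma mstart_succ (g : ℕ → Set Pt) (n β k : ℕ) :
    mstart g n β (k + 1) = mnext g n β (mstart g n β k) :=
  Function.iterate_succ_apply' _ _ _

private lemma mstart_le_n (g : ℕ → Set Pt) (n β k : ℕ) : mstart g n β k ≤ n := by
  induction k with
  | zero => rw [mstart_zero]; omega
  | succ k _ => rw [mstart_succ]; exact mnext_le g n β _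

private lemma mstart_le_succ (g : ℕ → Set Pt) (n β k : ℕ) :
    mstart g n β k ≤ mstart g n β (k + 1) := by
  rw [mstart_succ]
  by_cases h : mstart g n β k < n
  · exact (mnext_gt g n β h).le
  · have := mstart_le_n g n β k
    rw [mnext, if_neg h]; omega

private lemma mstart_mono (g : ℕ → Set Pt) (n β : ℕ) : Monotone (mstart g n β) :=
  monotone_nat_of_le_succ (mstart_le_succ g n β)

private lemma mstart_min (g : ℕ → Set Pt) (n β k : ℕ) : min k n ≤ mstart g n β k := by
  induction k with
  | zero => simp
  | succ k ih =>
    have h2 := mstart_le_succ g n β k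
    by_cases h : mstart g n β k < n
    · have := mnext_gt g n β h
      rw [mstart_succ]; omega
    · have h1 := mstart_le_n g n β k
      omega

/-- The key combinatorial step: a greedy block decomposition gives a `2(β+1)`-coloring. -/
private lemma mcg_colorable (F : Set (Set Pt)) (hfin : F.Finite) (β n : ℕ) (g : ℕ → Set Pt)
    (hgF : ∀ i, i < n → g i ∈ F)
    (hcov : ∀ c ∈ F, ∃ i, i < n ∧ g i = c)
    (hprec : ∀ i j, i < j → j < n → prec (g i) (g j))
    (hcon : ∀ u ∈ F, ∀ v ∈ F, prec u v → (u ∩ v).Nonempty → chi (between F u v) ≤ β) :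
    Colorable F (2 * (β + 1)) := by
  classical
  -- every block is (β+1)-colorable
  have hblk' : ∀ k, ∃ φ : Set Pt → ℕ,
      (∀ c ∈ mseg g n (mstart g n β k) (mstart g n β (k + 1)), φ c < β + 1) ∧
      ∀ c ∈ mseg g n (mstart g n β k) (mstart g n β (k + 1)),
        ∀ d ∈ mseg g n (mstart g n β k) (mstart g n β (k + 1)),
          c ≠ d → (c ∩ d).Nonempty → φ c ≠ φ d := by
    intro k
    by_cases hk : mstart g n β k < n
    · have hc := mnext_chi g n β hk
      rw [← mstart_succ] at hc
      exact colorable_mono_nat (chi_colorable (mseg_finite g n _ _)) hc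
    · have hempty : mseg g n (mstart g n β k) (mstart g n β (k + 1)) = ∅ := by
        have h1 := mstart_le_n g n β k
        unfold mseg
        rw [Set.Ico_eq_empty (by omega), Set.image_empty]
      rw [hempty]
      exact ⟨fun _ => 0, fun c hc => absurd hc (Set.notMem_empty c),
        fun c hc => absurd hc (Set.notMem_empty c)⟩
  choose ψ hψ1 hψ2 using hblk'
  -- an index function
  have hcov' : ∀ c : Set Pt, ∃ i : ℕ, c ∈ F → i < n ∧ g i = c := by
    intro c
    by_cases hc : c ∈ F
    · obtain ⟨i, h⟩ := hcov c hc; exact ⟨i, fun _ => h⟩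
    · exact ⟨0, fun h => absurd h hc⟩
  choose idxf hidxf using hcov'
  -- the block index function
  have hKex : ∀ i, i < n → ∃ k, i < mstart g n β (k + 1) := by
    intro i hi
    refine ⟨n - 1, ?_⟩
    have h := mstart_min g n β (n - 1 + 1)
    omega
  have hK' : ∀ i : ℕ, ∃ k : ℕ, i < n → mstart g n β k ≤ i ∧ i < mstart g n β (k + 1) := by
    intro i
    by_cases hi : i < n
    · refine ⟨Nat.find (hKex i hi), fun _ => ⟨?_, Nat.find_spec (hKex i hi)⟩⟩
      rcases h : Nat.find (hKex i hi) with _ | m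
      · rw [mstart_zero]; omega
      · have hmin := Nat.find_min (hKex i hi) (show m < Nat.find (hKex i hi) by omega)
        omega
    · exact ⟨0, fun h => absurd h hi⟩
  choose Kf hKf using hK'
  -- membership of each curve in its block
  have hmemblk : ∀ c ∈ F,
      c ∈ mseg g n (mstart g n β (Kf (idxf c))) (mstart g n β (Kf (idxf c) + 1)) := by
    intro c hc
    obtain ⟨hilt, hgi⟩ := hidxf c hc
    obtain ⟨h1, h2⟩ := hKf (idxf c) hilt
    exact ⟨idxf c, ⟨h1, lt_min h2 hilt⟩, hgi⟩
  refine ⟨fun c => (Kf (idxf c) % 2) * (β + 1) + ψ (Kf (idxf c)) c, ?_, ?_⟩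
  · intro c hc
    have h1 := hψ1 _ c (hmemblk c hc)
    have h2 : Kf (idxf c) % 2 < 2 := Nat.mod_lt _ (by omega)
    dsimp only
    have h3 : Kf (idxf c) % 2 = 0 ∨ Kf (idxf c) % 2 = 1 := by omega
    rcases h3 with h | h <;> rw [h] <;> omega
  · suffices haux : ∀ c ∈ F, ∀ d ∈ F, (c ∩ d).Nonempty → idxf c < idxf d →
        (Kf (idxf c) % 2) * (β + 1) + ψ (Kf (idxf c)) c ≠
        (Kf (idxf d) % 2) * (β + 1) + ψ (Kf (idxf d)) d by
      intro c hc d hd hne hint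
      dsimp only
      have hic := hidxf c hc
      have hid := hidxf d hd
      have hij : idxf c ≠ idxf d := fun h => hne (by rw [← hic.2, ← hid.2, h])
      rcases hij.lt_or_gt with h | h
      · exact haux c hc d hd hint h
      · exact (haux d hd c hc (by rwa [Set.inter_comm]) h).symm
    intro c hc d hd hint hij
    obtain ⟨hiltn, hgic⟩ := hidxf c hc
    obtain ⟨hjltn, hgjd⟩ := hidxf d hd
    obtain ⟨hKc1, hKc2⟩ := hKf (idxf c) hiltn
    obtain ⟨hKd1, hKd2⟩ := hKf (idxf d) hjltn
    have hkle : Kf (idxf c) ≤ Kf (idxf d) := by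
      by_contra hlt
      push_neg at hlt
      have := mstart_mono g n β (show Kf (idxf d) + 1 ≤ Kf (idxf c) from hlt)
      omega
    have hne : c ≠ d := fun h => by rw [h] at hij; exact lt_irrefl _ hij
    rcases lt_trichotomy (Kf (idxf d)) (Kf (idxf c) + 1) with h | h | h
    · -- same block
      have hkeq : Kf (idxf d) = Kf (idxf c) := by omega
      have hd' := hmemblk d hd
      rw [hkeq] at hd' ⊢
      intro hEq
      exact hψ2 _ c (hmemblk c hc) d hd' hne hint (by omega)
    · -- adjacent blocks: disjoint palettes
      have h1 := hψ1 _ c (hmemblk c hc)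
      have h2 := hψ1 _ d (hmemblk d hd)
      rw [h] at h2 ⊢
      have hp : Kf (idxf c) % 2 = 0 ∧ (Kf (idxf c) + 1) % 2 = 1 ∨
          Kf (idxf c) % 2 = 1 ∧ (Kf (idxf c) + 1) % 2 = 0 := by omega
      rcases hp with ⟨ha, hb⟩ | ⟨ha, hb⟩ <;> rw [ha, hb] <;> omega
    · -- distant blocks: impossible
      exfalso
      have hprec_cd : prec c d := by
        rw [← hgic, ← hgjd]; exact hprec _ _ hij hjltn
      have hbound := hcon c hc d hd hprec_cd hint
      have hs_le_j : mstart g n β (Kf (idxf c) + 1 + 1) ≤ idxf d :=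
        le_trans (mstart_mono g n β (by omega : Kf (idxf c) + 1 + 1 ≤ Kf (idxf d))) hKd1
      have hsle := mstart_le_succ g n β (Kf (idxf c) + 1)
      have hsn : mstart g n β (Kf (idxf c) + 1) < n := by omega
      have hnext_eq : mnext g n β (mstart g n β (Kf (idxf c) + 1)) =
          mstart g n β (Kf (idxf c) + 1 + 1) := (mstart_succ g n β (Kf (idxf c) + 1)).symm
      have hnn : mnext g n β (mstart g n β (Kf (idxf c) + 1)) < n := by
        rw [hnext_eq]; omega
      have hbig := mnext_max g n β hsn hnn
      have hsub : mseg g n (mstart g n β (Kf (idxf c) + 1))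
          (mnext g n β (mstart g n β (Kf (idxf c) + 1))) ⊆ between F c d := by
        rintro x ⟨m, ⟨hm1, hm2⟩, rfl⟩
        have hmn : m < n := by omega
        have hm3 : m < mstart g n β (Kf (idxf c) + 1 + 1) := by
          rw [← hnext_eq]; omega
        refine ⟨hgF m hmn, ?_, ?_⟩
        · rw [← hgic]; exact hprec _ _ (by omega) hmn
        · rw [← hgjd]; exact hprec _ _ (by omega) hjltn
      have hmono := chi_mono (hfin.subset (fun x hx => hx.1 :
        between F c d ⊆ F)) hsub
      omega

end McGAux

/-- Corollary of McGuinness' lemma. -/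
theorem mcguinness_corollary (F : Set (Set Pt)) (hF : IsGrounded F) (β : ℕ)
    (hchi : 2 * (β + 1) < chi F) :
    ∃ u ∈ F, ∃ v ∈ F, prec u v ∧ (u ∩ v).Nonempty ∧
      β < chi (between F u v) := by
  by_contra hcontra
  push_neg at hcontra
  have hfin := hF.1
  classical
  set L : List (Set Pt) :=
    hfin.toFinset.toList.mergeSort (fun a b => decide ((basepoint a).1 ≤ (basepoint b).1))
    with hL
  have hperm : L.Perm hfin.toFinset.toList := List.mergeSort_perm _ _
  have hmemL : ∀ c, c ∈ L ↔ c ∈ F := by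
    intro c; rw [hperm.mem_iff]; simp
  have hnodup : L.Nodup := hperm.nodup_iff.2 (Finset.nodup_toList _)
  have hsorted : L.Pairwise (fun a b => (basepoint a).1 ≤ (basepoint b).1) := by
    have hs := List.pairwise_mergeSort
      (le := fun a b : Set Pt => decide ((basepoint a).1 ≤ (basepoint b).1))
      (fun a b c hab hbc => by
        simp only [decide_eq_true_eq] at *; exact le_trans hab hbc)
      (fun a b => by simpa using le_total (basepoint a).1 (basepoint b).1)
      hfin.toFinset.toList
    exact hs.imp (fun h => of_decide_eq_true h)
  set n := L.length with hn
  set g : ℕ → Set Pt := fun i => L.getD i ∅ with hg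
  have hgget : ∀ i (hi : i < n), g i = L[i]'(hn ▸ hi) := fun i hi => List.getD_eq_getElem L ∅ _
  have hgF : ∀ i, i < n → g i ∈ F := fun i hi =>
    (hmemL _).1 (by rw [hgget i hi]; exact List.getElem_mem _)
  have hcov : ∀ c ∈ F, ∃ i, i < n ∧ g i = c := by
    intro c hc
    obtain ⟨i, hi, hgi⟩ := List.getElem_of_mem ((hmemL c).2 hc)
    have hi' : i < n := by omega
    exact ⟨i, hi', by rw [hgget i hi']; exact hgi⟩
  have hprec : ∀ i j, i < j → j < n → prec (g i) (g j) := by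
    intro i j hij hj
    have hi : i < n := hij.trans hj
    have hle : (basepoint (g i)).1 ≤ (basepoint (g j)).1 := by
      rw [hgget i hi, hgget j hj]
      exact List.pairwise_iff_getElem.1 hsorted i j hi hj hij
    have hgne : g i ≠ g j := by
      rw [hgget i hi, hgget j hj]
      intro h
      exact absurd (hnodup.getElem_inj_iff.1 h) (by omega)
    have hbne : basepoint (g i) ≠ basepoint (g j) :=
      hF.2.2 _ (hgF i hi) _ (hgF j hj) hgne
    have h1 := basepoint_snd (hF.2.1 _ (hgF i hi))
    have h2 := basepoint_snd (hF.2.1 _ (hgF j hj))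
    exact lt_of_le_of_ne hle fun hx => hbne (Prod.ext hx (h1.trans h2.symm))
  have hcol := mcg_colorable F hfin β n g hgF hcov hprec hcontra
  have := chi_le hcol
  omega
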